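/- Suppose the covering is moderate with constant C̃ (μ(U_i) ≤ C̃ μ(U_j) whenever U_i ∩ U_j ≠ ∅) and that sup_{x,y∈U_i} m(x,y) ≤ C_m for all i. Fix z ∈ X, set v(x) = m(x,z), and choose points x_i ∈ U_i for all i ∈ I. Suppose there is a constant A such that ∫_X (osc(x,y) + |R(x,y)|) m(x,y) dμ(y) ≤ A for all x ∈ X. Then there exists a constant C', depending only on N, C̃ and C_m, such that for every x ∈ X the series Σ_{i∈I} |R(x,x_i)| v(x_i) μ(U_i) converges with Σ_{i∈I} |R(x,x_i)| v(x_i) μ(U_i) ≤ C' A v(x). (Pointwise absolute convergence claim of Lemma 5.10.) -/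

import Mathlib

open MeasureTheory
open scoped ENNReal NNReal

/-- The oscillation kernel `osc_{𝒰,Γ}(x,y) = sup_{z ∈ Q_y} |R(x,y) − Γ(y,z) R(x,z)|`,
where `Q_y = ⋃_{i : y ∈ U_i} U_i`. -/
noncomputable def osc {X I : Type*} (U : I → Set X) (R Γ : X → X → ℂ) (x y : X) : ℝ≥0∞ :=
  ⨆ z ∈ ⋃ i ∈ {i : I | y ∈ U i}, U i, (‖R x y - Γ y z * R x z‖₊ : ℝ≥0∞)

/-- **Pointwise absolute convergence claim of Lemma 5.10.** With `v(x) = m(x,z)` and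
points `x_i ∈ U_i`, the series `Σ_i |R(x,x_i)| v(x_i) μ(U_i)` converges for every `x`,
with `Σ_i |R(x,x_i)| v(x_i) μ(U_i) ≤ C' A v(x)`. -/
theorem stmt_13
    {X : Type*} [MeasurableSpace X] (μ : Measure X)
    {I : Type*} [Countable I] (U : I → Set X)
    (hUmeas : ∀ i, MeasurableSet (U i))
    (hUpos : ∀ i, 0 < μ (U i)) (hUfin : ∀ i, μ (U i) < ∞)
    (hcov : ∀ x : X, ∃ i, x ∈ U i)
    (N : ℕ) (hN : ∀ x : X, {i : I | x ∈ U i}.encard ≤ N)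
    (m : X → X → ℝ) (hm1 : ∀ x y, 1 ≤ m x y) (hmsymm : ∀ x y, m x y = m y x)
    (hmsub : ∀ x y z, m x y ≤ m x z * m z y) (hmmeas : Measurable (Function.uncurry m))
    (Ct : ℝ≥0∞) (hmod : ∀ i j, (U i ∩ U j).Nonempty → μ (U i) ≤ Ct * μ (U j))
    (Cm : ℝ) (hCm : ∀ i, ∀ x ∈ U i, ∀ y ∈ U i, m x y ≤ Cm)
    (z : X) (xi : I → X) (hxi : ∀ i, xi i ∈ U i)
    (R Γ : X → X → ℂ) (hRmeas : Measurable (Function.uncurry R))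
    (hΓ : ∀ x y, ‖Γ x y‖ = 1)
    (A : ℝ)
    (hA : ∀ x, ∫⁻ y, (osc U R Γ x y + (‖R x y‖₊ : ℝ≥0∞)) * ENNReal.ofReal (m x y) ∂μ
      ≤ ENNReal.ofReal A) :
    ∃ C' : ℝ, 0 < C' ∧ ∀ x : X,
      ∑' i, (‖R x (xi i)‖₊ : ℝ≥0∞) * ENNReal.ofReal (m (xi i) z) * μ (U i)
        ≤ ENNReal.ofReal (C' * A * m x z) := by
  classical
  set Cm' : ℝ := max Cm 1 with hCm'def
  have hCm'1 : (1:ℝ) ≤ Cm' := le_max_right _ _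
  have hCm'0 : (0:ℝ) ≤ Cm' := le_trans zero_le_one hCm'1
  refine ⟨((N : ℝ) + 1) * Cm', by positivity, fun x => ?_⟩
  set f : X → ℝ≥0∞ := fun y =>
    (osc U R Γ x y + (‖R x y‖₊ : ℝ≥0∞)) * ENNReal.ofReal (m x y) with hf
  set K : ℝ≥0∞ := ENNReal.ofReal Cm' * ENNReal.ofReal (m x z) with hK
  -- Step A: pointwise bound on each U i
  have pt : ∀ i, ∀ y ∈ U i,
      (‖R x (xi i)‖₊ : ℝ≥0∞) * ENNReal.ofReal (m (xi i) z) ≤ K * f y := by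
    intro i y hy
    have h1 : (‖R x (xi i)‖₊ : ℝ≥0∞) ≤ osc U R Γ x y + (‖R x y‖₊ : ℝ≥0∞) := by
      have hmem : xi i ∈ ⋃ j ∈ {j : I | y ∈ U j}, U j :=
        Set.mem_biUnion (show i ∈ {j : I | y ∈ U j} from hy) (hxi i)
      have h2 : (‖R x y - Γ y (xi i) * R x (xi i)‖₊ : ℝ≥0∞) ≤ osc U R Γ x y := by
        unfold osc
        exact le_iSup₂ (f := fun w (_ : w ∈ ⋃ j ∈ {j : I | y ∈ U j}, U j) =>
          (‖R x y - Γ y w * R x w‖₊ : ℝ≥0∞)) (xi i) hmem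
      have h3 : ‖R x (xi i)‖ ≤ ‖R x y - Γ y (xi i) * R x (xi i)‖ + ‖R x y‖ := by
        have h4 := norm_sub_le (R x y) (R x y - Γ y (xi i) * R x (xi i))
        have h5 : R x y - (R x y - Γ y (xi i) * R x (xi i)) = Γ y (xi i) * R x (xi i) := by
          ring
        rw [h5, norm_mul, hΓ, one_mul] at h4
        linarith
      calc (‖R x (xi i)‖₊ : ℝ≥0∞) = ENNReal.ofReal ‖R x (xi i)‖ :=
            (ofReal_norm _).symm
        _ ≤ ENNReal.ofReal (‖R x y - Γ y (xi i) * R x (xi i)‖ + ‖R x y‖) :=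
            ENNReal.ofReal_le_ofReal h3
        _ = (‖R x y - Γ y (xi i) * R x (xi i)‖₊ : ℝ≥0∞) + (‖R x y‖₊ : ℝ≥0∞) := by
            rw [ENNReal.ofReal_add (norm_nonneg _) (norm_nonneg _),
              ofReal_norm, ofReal_norm]; rfl
        _ ≤ osc U R Γ x y + (‖R x y‖₊ : ℝ≥0∞) := add_le_add_left h2 _
    have h6 : m (xi i) z ≤ Cm' * (m x y * m x z) := by
      have a1 := hmsub (xi i) z y
      have a2 := hmsub y z x
      have a3 : m (xi i) y ≤ Cm' := le_trans (hCm i (xi i) (hxi i) y hy) (le_max_left _ _)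
      have a5 := hm1 y z
      have a6 := hm1 y x
      have a7 := hm1 x z
      have b1 : m (xi i) y * m y z ≤ Cm' * (m y x * m x z) :=
        mul_le_mul a3 a2 (by linarith) hCm'0
      calc m (xi i) z ≤ m (xi i) y * m y z := a1
        _ ≤ Cm' * (m y x * m x z) := b1
        _ = Cm' * (m x y * m x z) := by rw [hmsymm y x]
    have h7 : ENNReal.ofReal (m (xi i) z)
        ≤ ENNReal.ofReal Cm' * (ENNReal.ofReal (m x y) * ENNReal.ofReal (m x z)) := by
      refine (ENNReal.ofReal_le_ofReal h6).trans (le_of_eq ?_)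
      rw [ENNReal.ofReal_mul hCm'0, ENNReal.ofReal_mul (by linarith [hm1 x y])]
    calc (‖R x (xi i)‖₊ : ℝ≥0∞) * ENNReal.ofReal (m (xi i) z)
        ≤ (osc U R Γ x y + (‖R x y‖₊ : ℝ≥0∞)) *
          (ENNReal.ofReal Cm' * (ENNReal.ofReal (m x y) * ENNReal.ofReal (m x z))) :=
          mul_le_mul' h1 h7
      _ = K * f y := by rw [hK, hf]; ring
  have hKne : K ≠ ∞ := ENNReal.mul_ne_top ENNReal.ofReal_ne_top ENNReal.ofReal_ne_top
  -- Step B: integrate the pointwise bound over U i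
  have hterm : ∀ i, (‖R x (xi i)‖₊ : ℝ≥0∞) * ENNReal.ofReal (m (xi i) z) * μ (U i)
      ≤ K * ∫⁻ y in U i, f y ∂μ := by
    intro i
    have e : (‖R x (xi i)‖₊ : ℝ≥0∞) * ENNReal.ofReal (m (xi i) z) * μ (U i)
        = ∫⁻ _ in U i, (‖R x (xi i)‖₊ : ℝ≥0∞) * ENNReal.ofReal (m (xi i) z) ∂μ := by
      rw [setLIntegral_const]
    rw [e]
    refine le_trans (lintegral_mono_ae ?_)
      (le_of_eq (lintegral_const_mul' K f hKne))
    exact ae_restrict_of_forall_mem (hUmeas i) (pt i)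
  -- Step C: the overlap bound as a measure inequality
  have hmeasle : Measure.sum (fun i => μ.restrict (U i)) ≤ (N : ℝ≥0∞) • μ := by
    refine Measure.le_iff.2 fun s hs => ?_
    rw [Measure.sum_apply _ hs]
    have e1 : ∀ i, μ.restrict (U i) s = ∫⁻ y, (s ∩ U i).indicator 1 y ∂μ := by
      intro i
      rw [Measure.restrict_apply hs, lintegral_indicator_one (hs.inter (hUmeas i))]
    simp_rw [e1]
    rw [← lintegral_tsum
      (fun i => (measurable_one.indicator (hs.inter (hUmeas i))).aemeasurable)]
    have hpt : ∀ y, (∑' i, (s ∩ U i).indicator (1 : X → ℝ≥0∞) y)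
        ≤ s.indicator (fun _ => (N : ℝ≥0∞)) y := by
      intro y
      by_cases hy : y ∈ s
      · have e2 : ∀ i : I, (s ∩ U i).indicator (1 : X → ℝ≥0∞) y
            = ({j : I | y ∈ U j}).indicator (fun _ => (1 : ℝ≥0∞)) i := by
          intro i
          by_cases hyi : y ∈ U i
          · rw [Set.indicator_of_mem (show y ∈ s ∩ U i from ⟨hy, hyi⟩),
              Set.indicator_of_mem (show i ∈ {j : I | y ∈ U j} from hyi)]
            rfl
          · rw [Set.indicator_of_notMem (fun h => hyi h.2),
              Set.indicator_of_notMem (show i ∉ {j : I | y ∈ U j} from hyi)]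
        rw [tsum_congr e2, ← tsum_subtype, Set.indicator_of_mem hy,
          ENNReal.tsum_set_one]
        have := ENat.toENNReal_le.2 (hN y)
        simpa using this
      · have e3 : ∀ i : I, (s ∩ U i).indicator (1 : X → ℝ≥0∞) y = 0 := fun i =>
          Set.indicator_of_notMem (fun h => hy h.1) _
        rw [tsum_congr e3, Set.indicator_of_notMem hy]
        simp
    calc (∫⁻ y, ∑' i, (s ∩ U i).indicator (1 : X → ℝ≥0∞) y ∂μ)
        ≤ ∫⁻ y, s.indicator (fun _ => (N : ℝ≥0∞)) y ∂μ := lintegral_mono hpt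
      _ = (N : ℝ≥0∞) * μ s := lintegral_indicator_const hs _
      _ = ((N : ℝ≥0∞) • μ) s := by simp [Measure.smul_apply]
  -- combine everything
  have main : (∑' i, (‖R x (xi i)‖₊ : ℝ≥0∞) * ENNReal.ofReal (m (xi i) z) * μ (U i))
      ≤ K * ((N : ℝ≥0∞) * ENNReal.ofReal A) := by
    calc (∑' i, (‖R x (xi i)‖₊ : ℝ≥0∞) * ENNReal.ofReal (m (xi i) z) * μ (U i))
        ≤ ∑' i, K * ∫⁻ y in U i, f y ∂μ := ENNReal.tsum_le_tsum hterm
      _ = K * ∑' i, ∫⁻ y in U i, f y ∂μ := ENNReal.tsum_mul_left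
      _ = K * ∫⁻ y, f y ∂(Measure.sum fun i => μ.restrict (U i)) := by
          rw [lintegral_sum_measure]
      _ ≤ K * ∫⁻ y, f y ∂((N : ℝ≥0∞) • μ) :=
          mul_le_mul_right (lintegral_mono' hmeasle le_rfl) K
      _ = K * ((N : ℝ≥0∞) * ∫⁻ y, f y ∂μ) := by rw [lintegral_smul_measure, smul_eq_mul]
      _ ≤ K * ((N : ℝ≥0∞) * ENNReal.ofReal A) := by
          gcongr
          exact hA x
  refine main.trans ?_
  rcases le_or_gt A 0 with hA0 | hA0
  · simp [ENNReal.ofReal_eq_zero.2 hA0]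
  · have hA0' : (0:ℝ) ≤ A := hA0.le
    have hv := hm1 x z
    rw [ENNReal.ofReal_mul (by positivity), ENNReal.ofReal_mul (by positivity),
      ENNReal.ofReal_mul (by positivity)]
    calc K * ((N : ℝ≥0∞) * ENNReal.ofReal A)
        = (N : ℝ≥0∞) * (ENNReal.ofReal Cm' * ENNReal.ofReal A * ENNReal.ofReal (m x z)) := by
          rw [hK]; ring
      _ ≤ ((N : ℝ≥0∞) + 1) *
          (ENNReal.ofReal Cm' * ENNReal.ofReal A * ENNReal.ofReal (m x z)) := by
          gcongr
          exact le_self_add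
      _ = ENNReal.ofReal ((N : ℝ) + 1) *
          (ENNReal.ofReal Cm' * ENNReal.ofReal A * ENNReal.ofReal (m x z)) := by
          rw [ENNReal.ofReal_add (by positivity) zero_le_one, ENNReal.ofReal_natCast,
            ENNReal.ofReal_one]
      _ = ENNReal.ofReal ((N : ℝ) + 1) * ENNReal.ofReal Cm' * ENNReal.ofReal A *
          ENNReal.ofReal (m x z) := by ring
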